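/- Let P be a finite poset that contains neither a copy of Λ nor a copy of V. Then there exists a constant c(P) ∈ ℕ, depending only on P, such that for every n ∈ ℕ, the poset Ramsey number satisfies R(P, Q_n) ≤ n + c(P). -/

import Mathlib

/-- The three-element poset `Λ` with elements `Z1, Z2, Z3` where `Z1 < Z3`, `Z2 < Z3`,
and `Z1`, `Z2` incomparable. (The poset `V` is its order dual `Lamᵒᵈ`.) -/
inductive Lam : Type where
  | Z1 : Lam
  | Z2 : Lam
  | Z3 : Lam
  deriving DecidableEq

/-- The order relation of `Λ` as a Boolean-valued function. -/
def Lam.ble : Lam → Lam → Bool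
  | .Z1, .Z1 => true
  | .Z2, .Z2 => true
  | .Z1, .Z3 => true
  | .Z2, .Z3 => true
  | .Z3, .Z3 => true
  | _, _ => false

instance : PartialOrder Lam where
  le a b := Lam.ble a b = true
  le_refl a := by cases a <;> rfl
  le_trans a b c hab hbc := by
    cases a <;> cases b <;> cases c <;> simp_all [Lam.ble]
  le_antisymm a b hab hba := by
    cases a <;> cases b <;> simp_all [Lam.ble]

/-- `P'` contains a copy of `P`: there is an injective map `f : P → P'` such that
`x ≤ y` iff `f x ≤ f y`. -/
def ContainsCopy (P P' : Type*) [PartialOrder P] [PartialOrder P'] : Prop :=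
  ∃ f : P → P', Function.Injective f ∧ ∀ x y : P, x ≤ y ↔ f x ≤ f y

/-- The blue/red colored Boolean lattice `Q_N` (with coloring `c`, blue = `true`,
red = `false`) contains a blue copy of the poset `P`. -/
def HasBlueCopy (P : Type*) [PartialOrder P] {N : ℕ} (c : Finset (Fin N) → Bool) : Prop :=
  ∃ f : P → Finset (Fin N), Function.Injective f ∧
    (∀ x y : P, x ≤ y ↔ f x ⊆ f y) ∧ ∀ x : P, c (f x) = true

/-- The blue/red colored Boolean lattice `Q_N` contains a red copy of
the Boolean lattice `Q_n`. -/
def HasRedCube (n : ℕ) {N : ℕ} (c : Finset (Fin N) → Bool) : Prop :=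
  ∃ f : Finset (Fin n) → Finset (Fin N), Function.Injective f ∧
    (∀ A B : Finset (Fin n), A ⊆ B ↔ f A ⊆ f B) ∧ ∀ A : Finset (Fin n), c (f A) = false

/-- The poset Ramsey number `R(P, Q_n)`: the least `N` such that every blue/red coloring
of `Q_N` contains a blue copy of `P` or a red copy of `Q_n`. -/
noncomputable def posetRamsey (P : Type*) [PartialOrder P] (n : ℕ) : ℕ :=
  sInf {N : ℕ | ∀ c : Finset (Fin N) → Bool, HasBlueCopy P c ∨ HasRedCube n c}

/-! ### Auxiliary material -/

open Finset

/-- Embedding of the first `n` coordinates into `Fin (n + m)`. -/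
def embNM (n m : ℕ) : Fin n ↪ Fin (n + m) :=
  ⟨fun x => ⟨x.1, by omega⟩, fun a b h => Fin.ext (by simpa [Fin.ext_iff] using h)⟩

/-- The set of the first `t` "extra" coordinates. -/
def Eset (n m t : ℕ) : Finset (Fin (n + m)) :=
  Finset.univ.filter (fun x => n ≤ x.1 ∧ x.1 < n + t)

lemma Eset_mono {n m : ℕ} {t t' : ℕ} (h : t ≤ t') : Eset n m t ⊆ Eset n m t' := by
  intro x hx
  simp only [Eset, mem_filter, mem_univ, true_and] at hx ⊢
  omega

lemma mem_map_embNM {n m : ℕ} {A : Finset (Fin n)} {x : Fin (n + m)}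
    (hx : x ∈ A.map (embNM n m)) : x.1 < n := by
  simp only [mem_map, embNM, Function.Embedding.coeFn_mk] at hx
  obtain ⟨a, _, rfl⟩ := hx
  exact a.2

/-- The chain lemma: any coloring of `Q_{n+m}` contains a red copy of `Q_n` or a blue
chain with `m + 1` elements. -/
lemma chainLemma (n m : ℕ) (c : Finset (Fin (n + m)) → Bool) :
    (∃ f : Finset (Fin n) → Finset (Fin (n + m)), Function.Injective f ∧
      (∀ A B, A ⊆ B ↔ f A ⊆ f B) ∧ ∀ A, c (f A) = false) ∨
    (∃ X : ℕ → Finset (Fin (n + m)),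
      (∀ i j, i < j → j ≤ m → X i ⊂ X j) ∧ ∀ i ≤ m, c (X i) = true) := by
  classical
  by_cases hch : ∃ X : ℕ → Finset (Fin (n + m)),
      (∀ i j, i < j → j ≤ m → X i ⊂ X j) ∧ ∀ i ≤ m, c (X i) = true
  · exact Or.inr hch
  left
  -- the "blue chain below A, confined" predicate
  set Pred : Finset (Fin n) → ℕ → Prop := fun A t =>
    ∃ X : ℕ → Finset (Fin (n + m)),
      (∀ i j, i < j → j < t → X i ⊂ X j) ∧ (∀ i < t, c (X i) = true) ∧
      (∀ i < t, X i ⊆ A.map (embNM n m) ∪ Eset n m i) with hPred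
  have pred0 : ∀ A, Pred A 0 := by
    intro A
    exact ⟨fun _ => ∅, by omega, by omega, by omega⟩
  have predBound : ∀ A t, Pred A t → t ≤ m := by
    intro A t ⟨X, hX1, hX2, hX3⟩
    by_contra hgt
    push_neg at hgt
    exact hch ⟨X, fun i j hij hj => hX1 i j hij (by omega), fun i hi => hX2 i (by omega)⟩
  set b : Finset (Fin n) → ℕ := fun A => Nat.findGreatest (Pred A) m with hb
  have predb : ∀ A, Pred A (b A) := fun A => Nat.findGreatest_spec (Nat.zero_le m) (pred0 A)
  have bmono : ∀ A B, A ⊆ B → b A ≤ b B := by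
    intro A B hAB
    apply Nat.le_findGreatest (Nat.findGreatest_le m)
    obtain ⟨X, h1, h2, h3⟩ := predb A
    exact ⟨X, h1, h2, fun i hi => (h3 i hi).trans
      (union_subset_union (map_subset_map.2 hAB) (Subset.refl _))⟩
  set f : Finset (Fin n) → Finset (Fin (n + m)) := fun A =>
    A.map (embNM n m) ∪ Eset n m (b A) with hf
  have hsub : ∀ A B, A ⊆ B → f A ⊆ f B := by
    intro A B hAB
    exact union_subset_union (map_subset_map.2 hAB) (Eset_mono (bmono A B hAB))
  have hsub' : ∀ A B, f A ⊆ f B → A ⊆ B := by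
    intro A B h x hx
    have : (embNM n m) x ∈ f B := h (mem_union_left _ (mem_map_of_mem _ hx))
    rcases mem_union.1 this with h' | h'
    · rcases mem_map.1 h' with ⟨y, hy, hyx⟩
      rwa [← (embNM n m).injective hyx]
    · exfalso
      simp only [Eset, mem_filter, mem_univ, true_and, embNM,
        Function.Embedding.coeFn_mk] at h'
      dsimp only [DFunLike.coe] at h'
      omega
  have hred : ∀ A, c (f A) = false := by
    intro A
    by_contra hblue
    rw [Bool.not_eq_false] at hblue
    obtain ⟨X, h1, h2, h3⟩ := predb A
    have hnext : Pred A (b A + 1) := by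
      refine ⟨fun i => if i < b A then X i else f A, ?_, ?_, ?_⟩
      · intro i j hij hj
        by_cases hjb : j < b A
        · simp only [if_pos (by omega : i < b A), if_pos hjb]
          exact h1 i j hij hjb
        · have hj' : j = b A := by omega
          simp only [if_pos (by omega : i < b A), if_neg (by omega : ¬ j < b A)]
          constructor
          · exact (h3 i (by omega)).trans
              (union_subset_union (Subset.refl _) (Eset_mono (by omega)))
          · intro hcon
            have hi' : i < b A := by omega
            have him : i < m := by
              have := predBound A (b A) (predb A); omega
            have hmem : (⟨n + i, by omega⟩ : Fin (n + m)) ∈ f A := by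
              apply mem_union_right
              simp only [Eset, mem_filter, mem_univ, true_and]
              omega
            have hmem' := hcon hmem
            have := h3 i (by omega) hmem'
            rcases mem_union.1 this with h' | h'
            · have := mem_map_embNM h'; simp at this
            · simp only [Eset, mem_filter, mem_univ, true_and] at h'
              omega
      · intro i hi
        by_cases hib : i < b A
        · simpa [if_pos hib] using h2 i hib
        · simpa [if_neg hib] using hblue
      · intro i hi
        by_cases hib : i < b A
        · simpa [hib] using h3 i hib
        · have hi' : i = b A := by omega
          subst hi'
          simp only [if_neg hib]
          exact Finset.Subset.rfl
    have hle : b A + 1 ≤ m := predBound A (b A + 1) hnext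
    have hfin : b A + 1 ≤ b A := Nat.le_findGreatest hle hnext
    omega
  refine ⟨f, ?_, fun A B => ⟨hsub A B, hsub' A B⟩, hred⟩
  intro A B hABf
  exact Subset.antisymm (hsub' A B (le_of_eq hABf)) (hsub' B A (le_of_eq hABf.symm))

instance : DecidableRel (α := Lam) (· ≤ ·) :=
  fun a b => decidable_of_iff (Lam.ble a b = true) Iff.rfl

lemma lam_case {P : Type*} [PartialOrder P] (h1 : ¬ ContainsCopy Lam P) {x y z : P}
    (hxy : x ≤ y) (hzy : z ≤ y) (hxz : ¬ x ≤ z) (hzx : ¬ z ≤ x) : False := by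
  have hyx : ¬ y ≤ x := fun h => hzx (hzy.trans h)
  have hyz : ¬ y ≤ z := fun h => hxz (hxy.trans h)
  apply h1
  refine ⟨fun a => match a with | .Z1 => x | .Z2 => z | .Z3 => y, ?_, ?_⟩
  · have hxz' : x ≠ z := fun h => hxz (by rw [h])
    have hxy' : x ≠ y := fun h => hyx (by rw [h])
    have hzy' : z ≠ y := fun h => hyz (by rw [h])
    intro a b hab
    cases a <;> cases b <;> simp_all
  · intro a b
    cases a <;> cases b
    · exact iff_of_true (by decide) le_rfl
    · exact iff_of_false (by decide) hxz
    · exact iff_of_true (by decide) hxy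
    · exact iff_of_false (by decide) hzx
    · exact iff_of_true (by decide) le_rfl
    · exact iff_of_true (by decide) hzy
    · exact iff_of_false (by decide) hyx
    · exact iff_of_false (by decide) hyz
    · exact iff_of_true (by decide) le_rfl

lemma dual_copy {P : Type*} [PartialOrder P] (h2 : ¬ ContainsCopy Lamᵒᵈ P) :
    ¬ ContainsCopy Lam Pᵒᵈ := by
  rintro ⟨f, hf1, hf2⟩
  exact h2 ⟨f, hf1, fun a b => hf2 b a⟩

/-- In a `Λ`- and `V`-free poset, comparability is transitive. -/
lemma comp_trans {P : Type*} [PartialOrder P]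
    (h1 : ¬ ContainsCopy Lam P) (h2 : ¬ ContainsCopy Lamᵒᵈ P)
    {x y z : P} (hxy : x ≤ y ∨ y ≤ x) (hyz : y ≤ z ∨ z ≤ y) : x ≤ z ∨ z ≤ x := by
  by_contra h
  push_neg at h
  rcases hxy with hxy | hyx
  · rcases hyz with hyz | hzy
    · exact h.1 (hxy.trans hyz)
    · exact lam_case h1 hxy hzy h.1 h.2
  · rcases hyz with hyz | hzy
    · exact lam_case (dual_copy h2)
        (show OrderDual.toDual x ≤ OrderDual.toDual y from hyx)
        (show OrderDual.toDual z ≤ OrderDual.toDual y from hyz) h.2 h.1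
    · exact h.2 (hzy.trans hyx)

/-- If a finite poset `P` contains neither a copy of `Λ` nor a copy of `V`,
then there is a constant `c(P)` such that `R(P, Q_n) ≤ n + c(P)` for every `n`. -/
theorem statement1 (P : Type*) [PartialOrder P] [Finite P]
    (h1 : ¬ ContainsCopy Lam P) (h2 : ¬ ContainsCopy Lamᵒᵈ P) :
    ∃ cP : ℕ, ∀ n : ℕ, posetRamsey P n ≤ n + cP := by
  classical
  letI : Fintype P := Fintype.ofFinite P
  set s : Setoid P := ⟨fun x y => x ≤ y ∨ y ≤ x,
    ⟨fun x => Or.inl le_rfl, fun h => h.symm, fun h h' => comp_trans h1 h2 h h'⟩⟩ with hs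
  letI : DecidableEq (Quotient s) := Classical.decEq _
  letI : Fintype (Quotient s) := Quotient.fintype s
  set m : ℕ := Fintype.card P with hm
  set k : ℕ := Fintype.card (Quotient s) with hk
  let eqk : Quotient s ≃ Fin k := Fintype.equivFin (Quotient s)
  refine ⟨m + k, fun n => Nat.sInf_le ?_⟩
  intro c
  -- the `k` pairwise-incomparable subcubes of `Q_{n+(m+k)}`
  let e1 : Fin (n + m) ↪ Fin (n + (m + k)) :=
    ⟨fun x => ⟨x.1, by omega⟩, fun a b h => Fin.ext (by simpa [Fin.ext_iff] using h)⟩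
  let pp : Fin k → Fin (n + (m + k)) := fun i => ⟨n + m + i.1, by omega⟩
  let emb : Fin k → Finset (Fin (n + m)) → Finset (Fin (n + (m + k))) :=
    fun i Y => Y.map e1 ∪ {pp i}
  have emb_mem_p : ∀ i Y, pp i ∈ emb i Y := fun i Y =>
    mem_union_right _ (mem_singleton_self _)
  have emb_not_mem : ∀ i j Y, i ≠ j → pp i ∉ emb j Y := by
    intro i j Y hij hmem
    rcases mem_union.1 hmem with h | h
    · obtain ⟨a, _, ha⟩ := mem_map.1 h
      have := congrArg Fin.val ha
      simp only [e1, pp, Function.Embedding.coeFn_mk] at this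
      dsimp only [DFunLike.coe] at this
      have ha2 := a.2
      omega
    · have h' := mem_singleton.1 h
      have := congrArg Fin.val h'
      simp only [pp] at this
      exact hij (Fin.ext (by omega))
  have emb_subset : ∀ i Y Z, emb i Y ⊆ emb i Z ↔ Y ⊆ Z := by
    intro i Y Z
    constructor
    · intro h y hy
      have h2 : e1 y ∈ emb i Z := h (mem_union_left _ (mem_map_of_mem _ hy))
      rcases mem_union.1 h2 with h' | h'
      · obtain ⟨a, ha, hae⟩ := mem_map.1 h'
        rwa [← e1.injective hae]
      · exfalso
        have := congrArg Fin.val (mem_singleton.1 h')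
        simp only [e1, pp, Function.Embedding.coeFn_mk] at this
        dsimp only [DFunLike.coe] at this
        have := y.2
        omega
    · intro h
      exact union_subset_union (map_subset_map.2 h) (Subset.refl _)
  by_cases hredcase : ∃ i : Fin k, ∃ f0 : Finset (Fin n) → Finset (Fin (n + m)),
      Function.Injective f0 ∧ (∀ A B, A ⊆ B ↔ f0 A ⊆ f0 B) ∧
      ∀ A, c (emb i (f0 A)) = false
  · right
    obtain ⟨i, f0, hinj, hiff, hcol⟩ := hredcase
    have embinj : Function.Injective (emb i) := fun Y Z h =>
      Subset.antisymm ((emb_subset i Y Z).1 h.le) ((emb_subset i Z Y).1 h.ge)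
    exact ⟨fun A => emb i (f0 A), fun A B h => hinj (embinj h),
      fun A B => (hiff A B).trans (emb_subset i _ _).symm, hcol⟩
  · left
    have hblue : ∀ i : Fin k, ∃ X : ℕ → Finset (Fin (n + m)),
        (∀ a b, a < b → b ≤ m → X a ⊂ X b) ∧ ∀ a ≤ m, c (emb i (X a)) = true := by
      intro i
      rcases chainLemma n m (fun Y => c (emb i Y)) with hr | hb
      · exact absurd ⟨i, hr⟩ hredcase
      · exact hb
    choose X hX1 hX2 using hblue
    -- the rank function
    let d : P → ℕ := fun x => (univ.filter (fun z => z ≤ x)).card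
    have hdm : ∀ x, d x ≤ m := fun x => by
      simpa [hm] using card_le_card (filter_subset (fun z => z ≤ x) univ)
    have hdmono : ∀ x y : P, x ≤ y → d x ≤ d y := by
      intro x y h
      apply card_le_card
      intro z hz
      rw [mem_filter] at hz ⊢
      exact ⟨hz.1, hz.2.trans h⟩
    have hdlt : ∀ x y : P, y < x → d y < d x := by
      intro x y hyx
      apply card_lt_card
      rw [Finset.ssubset_iff_of_subset]
      · exact ⟨x, mem_filter.2 ⟨mem_univ _, le_rfl⟩,
          fun hmem => absurd (mem_filter.1 hmem).2 (not_le_of_gt hyx)⟩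
      · intro z hz
        rw [mem_filter] at hz ⊢
        exact ⟨hz.1, hz.2.trans hyx.le⟩
    have hrank : ∀ x y : P, (x ≤ y ∨ y ≤ x) → (x ≤ y ↔ d x ≤ d y) := by
      intro x y hc
      constructor
      · exact hdmono x y
      · intro hd
        rcases hc with h | h
        · exact h
        · rcases h.lt_or_eq with hlt | rfl
          · exact absurd hd (not_le_of_gt (hdlt x y hlt))
          · exact le_rfl
    have hchain : ∀ (i : Fin k) (a b : ℕ), a ≤ m → b ≤ m → (X i a ⊆ X i b ↔ a ≤ b) := by
      intro i a b ha hb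
      constructor
      · intro hsub
        by_contra hab
        push_neg at hab
        have hss := hX1 i b a hab ha
        rw [Finset.ssubset_def] at hss
        exact hss.2 hsub
      · intro hab
        rcases eq_or_lt_of_le hab with rfl | h
        · exact Finset.Subset.rfl
        · exact (hX1 i a b h hb).subset
    let cl : P → Fin k := fun x => eqk (Quotient.mk s x)
    have hcl : ∀ x y : P, cl x = cl y ↔ (x ≤ y ∨ y ≤ x) := by
      intro x y
      constructor
      · intro h
        exact Quotient.exact (eqk.injective h)
      · intro h
        exact congrArg eqk (Quotient.sound h)
    have hFiff : ∀ x y : P,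
        x ≤ y ↔ emb (cl x) (X (cl x) (d x)) ⊆ emb (cl y) (X (cl y) (d y)) := by
      intro x y
      by_cases hcxy : cl x = cl y
      · have hcomp := (hcl x y).1 hcxy
        rw [hrank x y hcomp, ← hchain (cl x) (d x) (d y) (hdm x) (hdm y), ← hcxy]
        exact (emb_subset _ _ _).symm
      · exact iff_of_false (fun h => hcxy ((hcl x y).2 (Or.inl h)))
          (fun h => emb_not_mem (cl x) (cl y) _ hcxy (h (emb_mem_p _ _)))
    refine ⟨fun x => emb (cl x) (X (cl x) (d x)), ?_, hFiff,
      fun x => hX2 (cl x) (d x) (hdm x)⟩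
    intro x y h
    exact le_antisymm ((hFiff x y).2 (le_of_eq h)) ((hFiff y x).2 (le_of_eq h.symm))
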